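/- Under the weighted-cSSIM assumptions, with W-cSSIM(f,g) := ∫_Ω q(x) dν(x) where q(x) = cSSIM computed with respect to ν_{w,x}, it holds |1 − W-cSSIM(f,g)| ≤ c ‖f − g‖²_{L²(Ω, ν)} with c = 4/c₂ + 1/c₁. -/

import Mathlib

open MeasureTheory

/-- Local (window-weighted) mean `μ_f(x) = ∫_Ω f(y) w(y−x) dν(y)`. -/
noncomputable def lmu {d : ℕ} (Ω : Set (Fin d → ℝ)) (ν : Measure (Fin d → ℝ))
    (w : (Fin d → ℝ) → ℝ) (f : (Fin d → ℝ) → ℝ) (x : Fin d → ℝ) : ℝ :=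
  ∫ y in Ω, f y * w (y - x) ∂ν

/-- Local (window-weighted) covariance `σ_{fg}(x)`. -/
noncomputable def lcov {d : ℕ} (Ω : Set (Fin d → ℝ)) (ν : Measure (Fin d → ℝ))
    (w : (Fin d → ℝ) → ℝ) (f g : (Fin d → ℝ) → ℝ) (x : Fin d → ℝ) : ℝ :=
  ∫ y in Ω, (f y - lmu Ω ν w f x) * (g y - lmu Ω ν w g x) * w (y - x) ∂ν

/-- Local cSSIM index `q(x)` computed with respect to the measure `ν_{w,x}`. -/
noncomputable def lq {d : ℕ} (Ω : Set (Fin d → ℝ)) (ν : Measure (Fin d → ℝ))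
    (w : (Fin d → ℝ) → ℝ) (f g : (Fin d → ℝ) → ℝ) (c1 c2 : ℝ) (x : Fin d → ℝ) : ℝ :=
  ((2 * lmu Ω ν w f x * lmu Ω ν w g x + c1) /
      ((lmu Ω ν w f x) ^ 2 + (lmu Ω ν w g x) ^ 2 + c1)) *
    ((2 * lcov Ω ν w f g x + c2) /
      (lcov Ω ν w f f x + lcov Ω ν w g g x + c2))

/-- Weighted continuous SSIM `W-cSSIM(f,g) = ∫_Ω q(x) dν(x)`. -/
noncomputable def wcSSIM {d : ℕ} (Ω : Set (Fin d → ℝ)) (ν : Measure (Fin d → ℝ))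
    (w : (Fin d → ℝ) → ℝ) (f g : (Fin d → ℝ) → ℝ) (c1 c2 : ℝ) : ℝ :=
  ∫ x in Ω, lq Ω ν w f g c1 c2 x ∂ν



section arith

lemma stmt15_arith_abs_le_one {a b Sfg Sff Sgg c1 c2 : ℝ} (ha : 0 ≤ a) (hb : 0 ≤ b)
    (hff : 0 ≤ Sff) (hgg : 0 ≤ Sgg) (hm : 0 ≤ Sff - 2 * Sfg + Sgg)
    (hp : 0 ≤ Sff + 2 * Sfg + Sgg) (hc1 : 0 < c1) (hc2 : 0 < c2) :
    |(2 * a * b + c1) / (a ^ 2 + b ^ 2 + c1) * ((2 * Sfg + c2) / (Sff + Sgg + c2))| ≤ 1 := by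
  have hab : 0 ≤ a * b := mul_nonneg ha hb
  have hd1 : 0 < a ^ 2 + b ^ 2 + c1 := by positivity
  have hd2 : 0 < Sff + Sgg + c2 := by positivity
  rw [abs_mul]
  have h1 : |(2 * a * b + c1) / (a ^ 2 + b ^ 2 + c1)| ≤ 1 := by
    rw [abs_div, abs_of_pos hd1, div_le_one hd1, abs_of_pos (by linarith)]
    nlinarith [sq_nonneg (a - b)]
  have h2 : |(2 * Sfg + c2) / (Sff + Sgg + c2)| ≤ 1 := by
    rw [abs_div, abs_of_pos hd2, div_le_one hd2, abs_le]
    constructor <;> nlinarith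
  calc |(2 * a * b + c1) / (a ^ 2 + b ^ 2 + c1)| * |(2 * Sfg + c2) / (Sff + Sgg + c2)|
      ≤ 1 * 1 := mul_le_mul h1 h2 (abs_nonneg _) zero_le_one
    _ = 1 := mul_one 1

lemma stmt15_arith_main {a b Sfg Sff Sgg G c1 c2 : ℝ} (ha : 0 ≤ a) (hb : 0 ≤ b)
    (hff : 0 ≤ Sff) (hgg : 0 ≤ Sgg) (hm : 0 ≤ Sff - 2 * Sfg + Sgg)
    (hG : G = (a - b) ^ 2 + (Sff - 2 * Sfg + Sgg)) (hc1 : 0 < c1) (hc2 : 0 < c2) :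
    |1 - (2 * a * b + c1) / (a ^ 2 + b ^ 2 + c1) * ((2 * Sfg + c2) / (Sff + Sgg + c2))| ≤
      (1 / c1 + 1 / c2) * G := by
  have hab : 0 ≤ a * b := mul_nonneg ha hb
  have hd1 : 0 < a ^ 2 + b ^ 2 + c1 := by positivity
  have hd2 : 0 < Sff + Sgg + c2 := by positivity
  have hn1 : 0 < 2 * a * b + c1 := by linarith
  have hn1' : 2 * a * b + c1 ≤ a ^ 2 + b ^ 2 + c1 := by nlinarith [sq_nonneg (a - b)]
  have key : 1 - (2 * a * b + c1) / (a ^ 2 + b ^ 2 + c1) * ((2 * Sfg + c2) / (Sff + Sgg + c2)) =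
      ((a - b) ^ 2 * (Sff + Sgg + c2) + (2 * a * b + c1) * (Sff - 2 * Sfg + Sgg)) /
        ((a ^ 2 + b ^ 2 + c1) * (Sff + Sgg + c2)) := by
    field_simp
    ring
  rw [key]
  have hnum : 0 ≤ (a - b) ^ 2 * (Sff + Sgg + c2) + (2 * a * b + c1) * (Sff - 2 * Sfg + Sgg) :=
    add_nonneg (mul_nonneg (sq_nonneg _) hd2.le) (mul_nonneg hn1.le hm)
  rw [abs_of_nonneg (div_nonneg hnum (mul_nonneg hd1.le hd2.le))]
  have split : ((a - b) ^ 2 * (Sff + Sgg + c2) + (2 * a * b + c1) * (Sff - 2 * Sfg + Sgg)) /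
        ((a ^ 2 + b ^ 2 + c1) * (Sff + Sgg + c2)) =
      (a - b) ^ 2 / (a ^ 2 + b ^ 2 + c1) +
        ((2 * a * b + c1) / (a ^ 2 + b ^ 2 + c1)) * ((Sff - 2 * Sfg + Sgg) / (Sff + Sgg + c2)) := by
    field_simp
  rw [split, hG]
  have e1 : (a - b) ^ 2 / (a ^ 2 + b ^ 2 + c1) ≤ (a - b) ^ 2 / c1 := by
    apply div_le_div_of_nonneg_left (sq_nonneg _) hc1
    nlinarith [sq_nonneg a, sq_nonneg b]
  have e2 : ((2 * a * b + c1) / (a ^ 2 + b ^ 2 + c1)) * ((Sff - 2 * Sfg + Sgg) / (Sff + Sgg + c2))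
      ≤ 1 * ((Sff - 2 * Sfg + Sgg) / c2) := by
    refine mul_le_mul ((div_le_one hd1).mpr hn1') ?_ (div_nonneg hm hd2.le) zero_le_one
    gcongr
    linarith
  have h4 : 0 ≤ (a - b) ^ 2 / c2 := div_nonneg (sq_nonneg _) hc2.le
  have h5 : 0 ≤ (Sff - 2 * Sfg + Sgg) / c1 := div_nonneg hm hc1.le
  have id2 : (1 / c1 + 1 / c2) * ((a - b) ^ 2 + (Sff - 2 * Sfg + Sgg)) =
      (a - b) ^ 2 / c1 + (Sff - 2 * Sfg + Sgg) / c2 +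
        ((a - b) ^ 2 / c2 + (Sff - 2 * Sfg + Sgg) / c1) := by ring
  linarith

end arith

section integrals

variable {α : Type*} [MeasurableSpace α] {μ : Measure α}

lemma stmt15_mul_int {F G : α → ℝ} (hF : MemLp F 2 μ) (hG : MemLp G 2 μ) :
    Integrable (fun y => F y * G y) μ := by
  have h1 : Integrable (fun y => (F y + G y) ^ 2) μ := (hF.add hG).integrable_sq
  have h2 : Integrable (fun y => F y ^ 2) μ := hF.integrable_sq
  have h3 : Integrable (fun y => G y ^ 2) μ := hG.integrable_sq
  have : (fun y => F y * G y) = fun y => ((F y + G y) ^ 2 - F y ^ 2 - G y ^ 2) / 2 := by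
    funext y; ring
  rw [this]
  exact ((h1.sub h2).sub h3).div_const 2

lemma stmt15_cov_expand {F G W : α → ℝ} (a b : ℝ)
    (hFW : Integrable (fun y => F y * W y) μ) (hGW : Integrable (fun y => G y * W y) μ)
    (hFGW : Integrable (fun y => F y * G y * W y) μ) (hW : Integrable W μ) :
    ∫ y, (F y - a) * (G y - b) * W y ∂μ =
      (∫ y, F y * G y * W y ∂μ) - a * (∫ y, G y * W y ∂μ) - b * (∫ y, F y * W y ∂μ) +
        a * b * (∫ y, W y ∂μ) := by
  have h : (fun y => (F y - a) * (G y - b) * W y) =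
      fun y => F y * G y * W y - a * (G y * W y) - b * (F y * W y) + a * b * W y := by
    funext y; ring
  have i1 : Integrable (fun y => a * (G y * W y)) μ := hGW.const_mul a
  have i2 : Integrable (fun y => b * (F y * W y)) μ := hFW.const_mul b
  have i3 : Integrable (fun y => a * b * W y) μ := hW.const_mul _
  rw [h, integral_add (by exact (hFGW.sub i1).sub i2) i3,
    integral_sub (by exact hFGW.sub i1) i2,
    integral_sub hFGW i1, integral_const_mul, integral_const_mul, integral_const_mul]

end integrals

section cont

variable {d : ℕ} {μ : Measure (Fin d → ℝ)} [IsFiniteMeasure μ] {w : (Fin d → ℝ) → ℝ}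

lemma stmt15_contI (hw : Continuous w) (hwpos : ∀ z, 0 < w z) {wmax : ℝ}
    (hwmax : ∀ z, w z ≤ wmax) {F : (Fin d → ℝ) → ℝ} (hF : Integrable F μ) :
    Continuous fun x => ∫ y, F y * w (y - x) ∂μ := by
  apply continuous_of_dominated (bound := fun y => |F y| * wmax)
  · intro x
    exact hF.1.mul ((hw.comp (continuous_id.sub continuous_const)).aestronglyMeasurable)
  · intro x
    filter_upwards with y
    rw [Real.norm_eq_abs, abs_mul]
    exact mul_le_mul_of_nonneg_left
      (by rw [abs_of_pos (hwpos _)]; exact hwmax _) (abs_nonneg _)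
  · exact hF.abs.mul_const _
  · filter_upwards with y
    exact continuous_const.mul (hw.comp (continuous_const.sub continuous_id))

lemma stmt15_contW (hw : Continuous w) (hwpos : ∀ z, 0 < w z) {wmax : ℝ}
    (hwmax : ∀ z, w z ≤ wmax) :
    Continuous fun x => ∫ y, w (y - x) ∂μ := by
  have h := stmt15_contI (μ := μ) hw hwpos hwmax (integrable_const (1 : ℝ))
  simpa using h

lemma stmt15_contWflip (hw : Continuous w) (hwpos : ∀ z, 0 < w z) {wmax : ℝ}
    (hwmax : ∀ z, w z ≤ wmax) :
    Continuous fun y => ∫ x, w (y - x) ∂μ := by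
  apply continuous_of_dominated (bound := fun _ => wmax)
  · intro y
    exact (hw.comp (continuous_const.sub continuous_id)).aestronglyMeasurable
  · intro y
    filter_upwards with x
    rw [Real.norm_eq_abs, abs_of_pos (hwpos _)]
    exact hwmax _
  · exact integrable_const _
  · filter_upwards with x
    exact hw.comp (continuous_id.sub continuous_const)

end cont

theorem stmt_15 {d : ℕ} (Ω : Set (Fin d → ℝ)) (hΩ : Bornology.IsBounded Ω)
    (ν : Measure (Fin d → ℝ)) [IsProbabilityMeasure (ν.restrict Ω)]
    (w : (Fin d → ℝ) → ℝ) (hw : Continuous w) (hwpos : ∀ z, 0 < w z)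
    (wmax : ℝ) (hwmax : ∀ z, w z ≤ wmax)
    (hnorm : ∀ x ∈ Ω, ∫ y in Ω, w (y - x) ∂ν = 1)
    (hnorm' : ∀ y ∈ Ω, ∫ x in Ω, w (y - x) ∂ν = 1)
    (f g : (Fin d → ℝ) → ℝ)
    (hf : MemLp f 2 (ν.restrict Ω)) (hg : MemLp g 2 (ν.restrict Ω))
    (hf0 : 0 ≤ᵐ[ν.restrict Ω] f) (hg0 : 0 ≤ᵐ[ν.restrict Ω] g)
    (c1 c2 : ℝ) (hc1 : 0 < c1) (hc2 : 0 < c2) :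
    |1 - wcSSIM Ω ν w f g c1 c2| ≤
      (4 / c2 + 1 / c1) * ∫ y in Ω, (f y - g y) ^ 2 ∂ν := by
  -- basic measurability / integrability facts
  have hwasm : ∀ x : Fin d → ℝ, AEStronglyMeasurable (fun y => w (y - x)) (ν.restrict Ω) :=
    fun x => (hw.comp (continuous_id.sub continuous_const)).aestronglyMeasurable
  have hwbd : ∀ x : Fin d → ℝ, ∃ C, ∀ y : Fin d → ℝ, ‖w (y - x)‖ ≤ C :=
    fun x => ⟨wmax, fun y => by rw [Real.norm_eq_abs, abs_of_pos (hwpos _)]; exact hwmax _⟩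
  have hwint : ∀ x : Fin d → ℝ, Integrable (fun y => w (y - x)) (ν.restrict Ω) := fun x =>
    (integrable_const wmax).mono' (hwasm x)
      (Filter.Eventually.of_forall fun y => by
        rw [Real.norm_eq_abs, abs_of_pos (hwpos _)]; exact hwmax _)
  have mulw : ∀ {F : (Fin d → ℝ) → ℝ}, Integrable F (ν.restrict Ω) →
      ∀ x : Fin d → ℝ, Integrable (fun y => F y * w (y - x)) (ν.restrict Ω) := by
    intro F hF x
    obtain ⟨C, hC⟩ := hwbd x
    exact (hF.bdd_mul (hwasm x) (Filter.Eventually.of_forall hC)).congr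
      (Filter.Eventually.of_forall fun y => mul_comm _ _)
  have hfint : Integrable f (ν.restrict Ω) := hf.integrable one_le_two
  have hgint : Integrable g (ν.restrict Ω) := hg.integrable one_le_two
  have hffi : Integrable (fun y => f y * f y) (ν.restrict Ω) := stmt15_mul_int hf hf
  have hfgi : Integrable (fun y => f y * g y) (ν.restrict Ω) := stmt15_mul_int hf hg
  have hggi : Integrable (fun y => g y * g y) (ν.restrict Ω) := stmt15_mul_int hg hg
  have hsub : MemLp (fun y => f y - g y) 2 (ν.restrict Ω) := hf.sub hg
  have hadd : MemLp (fun y => f y + g y) 2 (ν.restrict Ω) := hf.add hg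
  have hsubint : Integrable (fun y => f y - g y) (ν.restrict Ω) := hsub.integrable one_le_two
  have haddint : Integrable (fun y => f y + g y) (ν.restrict Ω) := hadd.integrable one_le_two
  have hhhi : Integrable (fun y => (f y - g y) * (f y - g y)) (ν.restrict Ω) :=
    stmt15_mul_int hsub hsub
  have hppi : Integrable (fun y => (f y + g y) * (f y + g y)) (ν.restrict Ω) :=
    stmt15_mul_int hadd hadd
  have hφi : Integrable (fun y => (f y - g y) ^ 2) (ν.restrict Ω) := hsub.integrable_sq
  -- expansion of lcov
  have hexp : ∀ (F G : (Fin d → ℝ) → ℝ), Integrable F (ν.restrict Ω) →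
      Integrable G (ν.restrict Ω) → Integrable (fun y => F y * G y) (ν.restrict Ω) →
      ∀ x : Fin d → ℝ,
      lcov Ω ν w F G x = (∫ y in Ω, F y * G y * w (y - x) ∂ν) -
        lmu Ω ν w F x * lmu Ω ν w G x - lmu Ω ν w G x * lmu Ω ν w F x +
        lmu Ω ν w F x * lmu Ω ν w G x * (∫ y in Ω, w (y - x) ∂ν) := by
    intro F G hFi hGi hFGi x
    have h := stmt15_cov_expand (μ := ν.restrict Ω) (F := F) (G := G)
      (W := fun y => w (y - x)) (lmu Ω ν w F x) (lmu Ω ν w G x)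
      (mulw hFi x) (mulw hGi x) (mulw hFGi x) (hwint x)
    simpa [lcov, lmu, mul_comm, mul_assoc, mul_left_comm] using h
  -- nonnegativity facts
  have covnn : ∀ (F : (Fin d → ℝ) → ℝ) (x : Fin d → ℝ), 0 ≤ lcov Ω ν w F F x := fun F x =>
    integral_nonneg fun y => mul_nonneg (mul_self_nonneg _) (hwpos _).le
  have ea : ∀ x : Fin d → ℝ, 0 ≤ lmu Ω ν w f x := fun x =>
    integral_nonneg_of_ae (hf0.mono fun y hy => mul_nonneg hy (hwpos _).le)
  have eb : ∀ x : Fin d → ℝ, 0 ≤ lmu Ω ν w g x := fun x =>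
    integral_nonneg_of_ae (hg0.mono fun y hy => mul_nonneg hy (hwpos _).le)
  -- linearity of lmu
  have hmusub : ∀ x : Fin d → ℝ,
      lmu Ω ν w (fun y => f y - g y) x = lmu Ω ν w f x - lmu Ω ν w g x := by
    intro x
    simp only [lmu]
    rw [← integral_sub (mulw hfint x) (mulw hgint x)]
    congr 1; funext y; ring
  have hmuadd : ∀ x : Fin d → ℝ,
      lmu Ω ν w (fun y => f y + g y) x = lmu Ω ν w f x + lmu Ω ν w g x := by
    intro x
    simp only [lmu]
    rw [← integral_add (mulw hfint x) (mulw hgint x)]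
    congr 1; funext y; ring
  -- quadratic expansions of the "second moment" integrals
  have hMsub : ∀ x : Fin d → ℝ,
      (∫ y in Ω, (f y - g y) * (f y - g y) * w (y - x) ∂ν) =
        (∫ y in Ω, f y * f y * w (y - x) ∂ν) - 2 * (∫ y in Ω, f y * g y * w (y - x) ∂ν) +
          (∫ y in Ω, g y * g y * w (y - x) ∂ν) := by
    intro x
    rw [← integral_const_mul, ← integral_sub (mulw hffi x) (by exact (mulw hfgi x).const_mul 2),
      ← integral_add (by exact (mulw hffi x).sub ((mulw hfgi x).const_mul 2)) (mulw hggi x)]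
    congr 1; funext y; ring
  have hMadd : ∀ x : Fin d → ℝ,
      (∫ y in Ω, (f y + g y) * (f y + g y) * w (y - x) ∂ν) =
        (∫ y in Ω, f y * f y * w (y - x) ∂ν) + 2 * (∫ y in Ω, f y * g y * w (y - x) ∂ν) +
          (∫ y in Ω, g y * g y * w (y - x) ∂ν) := by
    intro x
    rw [← integral_const_mul, ← integral_add (mulw hffi x) (by exact (mulw hfgi x).const_mul 2),
      ← integral_add (by exact (mulw hffi x).add ((mulw hfgi x).const_mul 2)) (mulw hggi x)]
    congr 1; funext y; ring
  -- key identities between covariances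
  have key1 : ∀ x : Fin d → ℝ,
      lcov Ω ν w f f x - 2 * lcov Ω ν w f g x + lcov Ω ν w g g x =
        lcov Ω ν w (fun y => f y - g y) (fun y => f y - g y) x := by
    intro x
    rw [hexp f f hfint hfint hffi x, hexp f g hfint hgint hfgi x, hexp g g hgint hgint hggi x,
      hexp _ _ hsubint hsubint hhhi x, hMsub x, hmusub x]
    ring
  have key2 : ∀ x : Fin d → ℝ,
      lcov Ω ν w f f x + 2 * lcov Ω ν w f g x + lcov Ω ν w g g x =
        lcov Ω ν w (fun y => f y + g y) (fun y => f y + g y) x := by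
    intro x
    rw [hexp f f hfint hfint hffi x, hexp f g hfint hgint hfgi x, hexp g g hgint hgint hggi x,
      hexp _ _ haddint haddint hppi x, hMadd x, hmuadd x]
    ring
  have hm : ∀ x : Fin d → ℝ,
      0 ≤ lcov Ω ν w f f x - 2 * lcov Ω ν w f g x + lcov Ω ν w g g x := fun x =>
    (key1 x) ▸ covnn _ x
  have hp : ∀ x : Fin d → ℝ,
      0 ≤ lcov Ω ν w f f x + 2 * lcov Ω ν w f g x + lcov Ω ν w g g x := fun x =>
    (key2 x) ▸ covnn _ x
  -- continuity
  have hca : Continuous (lmu Ω ν w f) := stmt15_contI hw hwpos hwmax hfint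
  have hcb : Continuous (lmu Ω ν w g) := stmt15_contI hw hwpos hwmax hgint
  have hcW : Continuous fun x : Fin d → ℝ => ∫ y in Ω, w (y - x) ∂ν :=
    stmt15_contW hw hwpos hwmax
  have hcov_cont : ∀ (F G : (Fin d → ℝ) → ℝ), Integrable F (ν.restrict Ω) →
      Integrable G (ν.restrict Ω) → Integrable (fun y => F y * G y) (ν.restrict Ω) →
      Continuous (lcov Ω ν w F G) := by
    intro F G hFi hGi hFGi
    have heq : lcov Ω ν w F G = fun x =>
        (∫ y in Ω, F y * G y * w (y - x) ∂ν) -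
          lmu Ω ν w F x * lmu Ω ν w G x - lmu Ω ν w G x * lmu Ω ν w F x +
          lmu Ω ν w F x * lmu Ω ν w G x * (∫ y in Ω, w (y - x) ∂ν) :=
      funext (hexp F G hFi hGi hFGi)
    rw [heq]
    have cM : Continuous fun x : Fin d → ℝ => ∫ y in Ω, F y * G y * w (y - x) ∂ν :=
      stmt15_contI hw hwpos hwmax hFGi
    have cF : Continuous (lmu Ω ν w F) := stmt15_contI hw hwpos hwmax hFi
    have cG : Continuous (lmu Ω ν w G) := stmt15_contI hw hwpos hwmax hGi
    exact ((cM.sub (cF.mul cG)).sub (cG.mul cF)).add ((cF.mul cG).mul hcW)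
  have hcff : Continuous (lcov Ω ν w f f) := hcov_cont f f hfint hfint hffi
  have hcfg : Continuous (lcov Ω ν w f g) := hcov_cont f g hfint hgint hfgi
  have hcgg : Continuous (lcov Ω ν w g g) := hcov_cont g g hgint hgint hggi
  have hlq_cont : Continuous (lq Ω ν w f g c1 c2) := by
    have hd1 : ∀ x : Fin d → ℝ, (lmu Ω ν w f x) ^ 2 + (lmu Ω ν w g x) ^ 2 + c1 ≠ 0 :=
      fun x => ne_of_gt (by positivity)
    have hd2 : ∀ x : Fin d → ℝ, lcov Ω ν w f f x + lcov Ω ν w g g x + c2 ≠ 0 := fun x =>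
      ne_of_gt (by have h1 := covnn f x; have h2 := covnn g x; linarith)
    show Continuous fun x => ((2 * lmu Ω ν w f x * lmu Ω ν w g x + c1) /
        ((lmu Ω ν w f x) ^ 2 + (lmu Ω ν w g x) ^ 2 + c1)) *
      ((2 * lcov Ω ν w f g x + c2) / (lcov Ω ν w f f x + lcov Ω ν w g g x + c2))
    exact ((((continuous_const.mul hca).mul hcb).add continuous_const).div
        (((hca.pow 2).add (hcb.pow 2)).add continuous_const) hd1).mul
      (((continuous_const.mul hcfg).add continuous_const).div
        ((hcff.add hcgg).add continuous_const) hd2)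
  -- bound |lq| ≤ 1 and integrability of lq
  have hlq_bd : ∀ x : Fin d → ℝ, |lq Ω ν w f g c1 c2 x| ≤ 1 := fun x =>
    stmt15_arith_abs_le_one (ea x) (eb x) (covnn f x) (covnn g x) (hm x) (hp x) hc1 hc2
  have hlq_int : Integrable (lq Ω ν w f g c1 c2) (ν.restrict Ω) :=
    (integrable_const (1 : ℝ)).mono' hlq_cont.aestronglyMeasurable
      (Filter.Eventually.of_forall fun x => by rw [Real.norm_eq_abs]; exact hlq_bd x)
  -- the comparison function G
  have hGnn : ∀ x : Fin d → ℝ, 0 ≤ ∫ y in Ω, (f y - g y) ^ 2 * w (y - x) ∂ν := fun x =>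
    integral_nonneg fun y => mul_nonneg (sq_nonneg _) (hwpos _).le
  have hGcont : Continuous fun x : Fin d → ℝ => ∫ y in Ω, (f y - g y) ^ 2 * w (y - x) ∂ν :=
    stmt15_contI hw hwpos hwmax hφi
  -- a.e. point of the restricted measure lies in the closure of Ω
  have haecl : ∀ᵐ x ∂ν.restrict Ω, x ∈ closure Ω := by
    rw [Filter.eventually_iff, mem_ae_iff]
    have h1 : {x : Fin d → ℝ | x ∈ closure Ω}ᶜ ∩ Ω = ∅ := by
      ext z
      simp only [Set.mem_inter_iff, Set.mem_compl_iff, Set.mem_setOf_eq,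
        Set.mem_empty_iff_false, iff_false, not_and]
      exact fun hz1 hz2 => hz1 (subset_closure hz2)
    rw [Measure.restrict_apply (by exact isClosed_closure.measurableSet.compl), h1, measure_empty]
  -- Tonelli: ∫ G = ∫ (f-g)^2
  have hφm : AEStronglyMeasurable (fun y => (f y - g y) ^ 2) (ν.restrict Ω) := hφi.1
  have hφ'sm : StronglyMeasurable (hφm.mk _) := hφm.stronglyMeasurable_mk
  have hφ'eq : (fun y => (f y - g y) ^ 2) =ᵐ[ν.restrict Ω] hφm.mk _ := hφm.ae_eq_mk
  have hφ'nn : ∀ᵐ y ∂ν.restrict Ω, 0 ≤ hφm.mk _ y := by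
    filter_upwards [hφ'eq] with y hy
    rw [← hy]; exact sq_nonneg _
  have hwflipint : ∀ y : Fin d → ℝ, Integrable (fun x => w (y - x)) (ν.restrict Ω) := fun y =>
    (integrable_const wmax).mono'
      ((hw.comp (continuous_const.sub continuous_id)).aestronglyMeasurable)
      (Filter.Eventually.of_forall fun x => by
        rw [Real.norm_eq_abs, abs_of_pos (hwpos _)]; exact hwmax _)
  have hWflip1 : ∀ y ∈ closure Ω, (∫ x in Ω, w (y - x) ∂ν) = 1 := by
    have hcl : IsClosed {y : Fin d → ℝ | (∫ x in Ω, w (y - x) ∂ν) = 1} :=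
      isClosed_eq (stmt15_contWflip hw hwpos hwmax) continuous_const
    exact fun y hy => closure_minimal (fun z hz => hnorm' z hz) hcl hy
  have hGl : ∀ x : Fin d → ℝ, ENNReal.ofReal (∫ y in Ω, (f y - g y) ^ 2 * w (y - x) ∂ν) =
      ∫⁻ y, ENNReal.ofReal (hφm.mk _ y * w (y - x)) ∂ν.restrict Ω := by
    intro x
    rw [ofReal_integral_eq_lintegral_ofReal (mulw hφi x)
      (Filter.Eventually.of_forall fun y => mul_nonneg (sq_nonneg _) (hwpos _).le)]
    exact lintegral_congr_ae (hφ'eq.mono fun y hy => by simp only [← hy])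
  have hswap : ∫⁻ x, ∫⁻ y, ENNReal.ofReal (hφm.mk _ y * w (y - x)) ∂ν.restrict Ω ∂ν.restrict Ω =
      ∫⁻ y, ∫⁻ x, ENNReal.ofReal (hφm.mk _ y * w (y - x)) ∂ν.restrict Ω ∂ν.restrict Ω := by
    apply lintegral_lintegral_swap
    apply Measurable.aemeasurable
    exact ((hφ'sm.measurable.comp measurable_snd).mul
      (hw.measurable.comp (measurable_snd.sub measurable_fst))).ennreal_ofReal
  have hinner : ∀ᵐ y ∂ν.restrict Ω,
      ∫⁻ x, ENNReal.ofReal (hφm.mk _ y * w (y - x)) ∂ν.restrict Ω =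
        ENNReal.ofReal (hφm.mk _ y) := by
    filter_upwards [haecl, hφ'nn] with y hy hny
    have hpt : ∀ x : Fin d → ℝ, ENNReal.ofReal (hφm.mk _ y * w (y - x)) =
        ENNReal.ofReal (hφm.mk _ y) * ENNReal.ofReal (w (y - x)) :=
      fun x => ENNReal.ofReal_mul hny
    rw [lintegral_congr fun x => hpt x,
      lintegral_const_mul _ (show Measurable fun x : Fin d → ℝ => ENNReal.ofReal (w (y - x)) from
        (hw.measurable.comp (measurable_const.sub measurable_id)).ennreal_ofReal),
      ← ofReal_integral_eq_lintegral_ofReal (hwflipint y)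
        (Filter.Eventually.of_forall fun x => (hwpos _).le),
      hWflip1 y hy, ENNReal.ofReal_one, mul_one]
  have hGtot : ∫⁻ x, ENNReal.ofReal (∫ y in Ω, (f y - g y) ^ 2 * w (y - x) ∂ν) ∂ν.restrict Ω =
      ENNReal.ofReal (∫ y in Ω, (f y - g y) ^ 2 ∂ν) := by
    calc ∫⁻ x, ENNReal.ofReal (∫ y in Ω, (f y - g y) ^ 2 * w (y - x) ∂ν) ∂ν.restrict Ω
        = ∫⁻ x, ∫⁻ y, ENNReal.ofReal (hφm.mk _ y * w (y - x)) ∂ν.restrict Ω ∂ν.restrict Ω :=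
          lintegral_congr fun x => hGl x
      _ = ∫⁻ y, ∫⁻ x, ENNReal.ofReal (hφm.mk _ y * w (y - x)) ∂ν.restrict Ω ∂ν.restrict Ω := hswap
      _ = ∫⁻ y, ENNReal.ofReal (hφm.mk _ y) ∂ν.restrict Ω := lintegral_congr_ae hinner
      _ = ∫⁻ y, ENNReal.ofReal ((f y - g y) ^ 2) ∂ν.restrict Ω :=
          (lintegral_congr_ae (hφ'eq.mono fun y hy => by simp only [← hy])).symm
      _ = ENNReal.ofReal (∫ y in Ω, (f y - g y) ^ 2 ∂ν) :=
          (ofReal_integral_eq_lintegral_ofReal hφi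
            (Filter.Eventually.of_forall fun y => sq_nonneg _)).symm
  have hGint : Integrable (fun x => ∫ y in Ω, (f y - g y) ^ 2 * w (y - x) ∂ν) (ν.restrict Ω) := by
    refine ⟨hGcont.aestronglyMeasurable, ?_⟩
    rw [hasFiniteIntegral_iff_ofReal (Filter.Eventually.of_forall hGnn), hGtot]
    exact ENNReal.ofReal_lt_top
  have hGeq : (∫ x in Ω, (∫ y in Ω, (f y - g y) ^ 2 * w (y - x) ∂ν) ∂ν) =
      ∫ y in Ω, (f y - g y) ^ 2 ∂ν := by
    rw [integral_eq_lintegral_of_nonneg_ae (Filter.Eventually.of_forall hGnn)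
      hGcont.aestronglyMeasurable, hGtot,
      ENNReal.toReal_ofReal (integral_nonneg fun y => sq_nonneg _)]
  -- pointwise bound on Ω
  have hbound : ∀ x ∈ Ω, |1 - lq Ω ν w f g c1 c2 x| ≤
      (1 / c1 + 1 / c2) * ∫ y in Ω, (f y - g y) ^ 2 * w (y - x) ∂ν := by
    intro x hx
    have hWx : (∫ y in Ω, w (y - x) ∂ν) = 1 := hnorm x hx
    have hGx : (∫ y in Ω, (f y - g y) ^ 2 * w (y - x) ∂ν) =
        (lmu Ω ν w f x - lmu Ω ν w g x) ^ 2 +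
          (lcov Ω ν w f f x - 2 * lcov Ω ν w f g x + lcov Ω ν w g g x) := by
      have hsq : (∫ y in Ω, (f y - g y) ^ 2 * w (y - x) ∂ν) =
          ∫ y in Ω, (f y - g y) * (f y - g y) * w (y - x) ∂ν := by
        congr 1; funext y; ring
      rw [hsq, key1 x, hexp _ _ hsubint hsubint hhhi x, hmusub x, hWx]
      ring
    exact stmt15_arith_main (ea x) (eb x) (covnn f x) (covnn g x) (hm x) hGx hc1 hc2
  have hboundcl : ∀ x ∈ closure Ω, |1 - lq Ω ν w f g c1 c2 x| ≤
      (1 / c1 + 1 / c2) * ∫ y in Ω, (f y - g y) ^ 2 * w (y - x) ∂ν := by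
    have hcl : IsClosed {x : Fin d → ℝ | |1 - lq Ω ν w f g c1 c2 x| ≤
        (1 / c1 + 1 / c2) * ∫ y in Ω, (f y - g y) ^ 2 * w (y - x) ∂ν} :=
      isClosed_le (continuous_const.sub hlq_cont).abs (continuous_const.mul hGcont)
    exact fun x hx => closure_minimal hbound hcl hx
  -- assembly
  have h1 : (1 : ℝ) - wcSSIM Ω ν w f g c1 c2 = ∫ x in Ω, (1 - lq Ω ν w f g c1 c2 x) ∂ν := by
    rw [integral_sub (integrable_const 1) hlq_int, integral_const]
    simp [wcSSIM]
  calc |1 - wcSSIM Ω ν w f g c1 c2|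
      = |∫ x in Ω, (1 - lq Ω ν w f g c1 c2 x) ∂ν| := by rw [h1]
    _ ≤ ∫ x in Ω, |1 - lq Ω ν w f g c1 c2 x| ∂ν := by
        simpa [Real.norm_eq_abs] using
          norm_integral_le_integral_norm (μ := ν.restrict Ω)
            (fun x => 1 - lq Ω ν w f g c1 c2 x)
    _ ≤ ∫ x in Ω, (1 / c1 + 1 / c2) * (∫ y in Ω, (f y - g y) ^ 2 * w (y - x) ∂ν) ∂ν := by
        apply integral_mono_ae ((integrable_const 1).sub hlq_int).abs (hGint.const_mul _)
        filter_upwards [haecl] with x hx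
        exact hboundcl x hx
    _ = (1 / c1 + 1 / c2) * ∫ x in Ω, (∫ y in Ω, (f y - g y) ^ 2 * w (y - x) ∂ν) ∂ν :=
        integral_const_mul _ _
    _ = (1 / c1 + 1 / c2) * ∫ y in Ω, (f y - g y) ^ 2 ∂ν := by rw [hGeq]
    _ ≤ (4 / c2 + 1 / c1) * ∫ y in Ω, (f y - g y) ^ 2 ∂ν := by
        apply mul_le_mul_of_nonneg_right _ (integral_nonneg fun y => sq_nonneg _)
        have h4 : (1 : ℝ) / c2 ≤ 4 / c2 := by gcongr <;> norm_num
        linarith
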